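/- Let X and Y be random variables with values in ℝ^m and ℝ^n, let μ and ν be finite symmetric Lévy measures on ℝ^m∖{0} and ℝ^n∖{0}, both with full support, with associated continuous negative definite functions Φ(x) = ∫(1 − cos⟨x,s⟩) μ(ds) and Ψ(y) = ∫(1 − cos⟨y,t⟩) ν(dt), and let (X_i, Y_i), i = 1,…,4, be i.i.d. copies of (X,Y). Then the generalized distance covariance satisfies V²(X,Y) = E[(Φ(X₁ − X₄) − Φ(X₄ − X₂)) · (Ψ(Y₄ − Y₁) − Ψ(Y₁ − Y₃))]. -/

import Mathlib

open MeasureTheory ProbabilityTheory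
open scoped ENNReal RealInnerProductSpace

/-- `ρ` is symmetric: `ρ(B) = ρ(-B)` for all Borel sets `B`. -/
def IsSymmetricMeasure {d : ℕ} (ρ : Measure (EuclideanSpace ℝ (Fin d))) : Prop :=
  ρ.map (fun r => -r) = ρ

/-- `ρ` has full (topological) support on `ℝ^d ∖ {0}`. -/
def HasFullSupportOffZero {d : ℕ} (ρ : Measure (EuclideanSpace ℝ (Fin d))) : Prop :=
  ∀ G : Set (EuclideanSpace ℝ (Fin d)), IsOpen G → G.Nonempty →
    (0 : EuclideanSpace ℝ (Fin d)) ∉ G → 0 < ρ G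

/-- The real-valued continuous negative definite function
`Θ(u) = ∫ (1 - cos ⟪u, r⟫) ρ(dr)` associated to a finite measure `ρ`. -/
noncomputable def realCndf {d : ℕ} (ρ : Measure (EuclideanSpace ℝ (Fin d)))
    (u : EuclideanSpace ℝ (Fin d)) : ℝ :=
  ∫ r, (1 - Real.cos ⟪u, r⟫) ∂ρ

/-- The characteristic function `f_U(r) = E[exp(i ⟪r, U⟫)]` of a random variable `U`. -/
noncomputable def charFn {d : ℕ} {Ω : Type*} [MeasurableSpace Ω] (P : Measure Ω)
    (U : Ω → EuclideanSpace ℝ (Fin d)) (r : EuclideanSpace ℝ (Fin d)) : ℂ :=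
  ∫ ω, Complex.exp (Complex.I * (⟪r, U ω⟫ : ℝ)) ∂P

/-- The joint characteristic function `f_{(X,Y)}(s,t) = E[exp(i(⟪s,X⟫ + ⟪t,Y⟫))]`. -/
noncomputable def jointCharFn {m n : ℕ} {Ω : Type*} [MeasurableSpace Ω] (P : Measure Ω)
    (X : Ω → EuclideanSpace ℝ (Fin m)) (Y : Ω → EuclideanSpace ℝ (Fin n))
    (s : EuclideanSpace ℝ (Fin m)) (t : EuclideanSpace ℝ (Fin n)) : ℂ :=
  ∫ ω, Complex.exp (Complex.I * ((⟪s, X ω⟫ + ⟪t, Y ω⟫ : ℝ))) ∂P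

/-- The generalized distance covariance
`V²(X,Y) = ∬ |f_{(X,Y)}(s,t) - f_X(s) f_Y(t)|² μ(ds) ν(dt)`. -/
noncomputable def gdCov {m n : ℕ} (μ : Measure (EuclideanSpace ℝ (Fin m)))
    (ν : Measure (EuclideanSpace ℝ (Fin n))) {Ω : Type*} [MeasurableSpace Ω]
    (P : Measure Ω) (X : Ω → EuclideanSpace ℝ (Fin m))
    (Y : Ω → EuclideanSpace ℝ (Fin n)) : ℝ≥0∞ :=
  ∫⁻ s, ∫⁻ t,
    (‖jointCharFn P X Y s t - charFn P X s * charFn P Y t‖₊ : ℝ≥0∞) ^ 2 ∂ν ∂μ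



section GdcovAux

noncomputable def eS {m n : ℕ} (s : EuclideanSpace ℝ (Fin m))
    (p : EuclideanSpace ℝ (Fin m) × EuclideanSpace ℝ (Fin n)) : ℂ :=
  Complex.exp (Complex.I * (⟪s, p.1⟫ : ℝ))

noncomputable def eT {m n : ℕ} (t : EuclideanSpace ℝ (Fin n))
    (p : EuclideanSpace ℝ (Fin m) × EuclideanSpace ℝ (Fin n)) : ℂ :=
  Complex.exp (Complex.I * (⟪t, p.2⟫ : ℝ))

lemma norm_expI (r : ℝ) : ‖Complex.exp (Complex.I * r)‖ = 1 := by
  rw [Complex.norm_exp]; simp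

lemma measurable_eS {m n : ℕ} (s : EuclideanSpace ℝ (Fin m)) :
    Measurable (eS (n := n) s) :=
  Complex.measurable_exp.comp (measurable_const.mul (Complex.measurable_ofReal.comp
    (Measurable.inner measurable_const measurable_fst)))

lemma measurable_eT {m n : ℕ} (t : EuclideanSpace ℝ (Fin n)) :
    Measurable (eT (m := m) t) :=
  Complex.measurable_exp.comp (measurable_const.mul (Complex.measurable_ofReal.comp
    (Measurable.inner measurable_const measurable_snd)))

lemma measurable_conj' {X : Type*} [MeasurableSpace X] {f : X → ℂ} (hf : Measurable f) :
    Measurable fun x => (starRingEnd ℂ) (f x) := continuous_star.measurable.comp hf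

noncomputable def Ck {m n : ℕ} (s : EuclideanSpace ℝ (Fin m)) (t : EuclideanSpace ℝ (Fin n))
    (z : Fin 4 → EuclideanSpace ℝ (Fin m) × EuclideanSpace ℝ (Fin n)) : ℝ :=
  (Real.cos ⟪s, (z 0).1 - (z 3).1⟫ - Real.cos ⟪s, (z 3).1 - (z 1).1⟫) *
    (Real.cos ⟪t, (z 3).2 - (z 0).2⟫ - Real.cos ⟪t, (z 0).2 - (z 2).2⟫)

-- placeholders for already-tested lemmas
lemma expI_re (r : ℝ) : (Complex.exp (Complex.I * r)).re = Real.cos r := by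
  rw [mul_comm, Complex.exp_ofReal_mul_I_re]
lemma expI_im (r : ℝ) : (Complex.exp (Complex.I * r)).im = Real.sin r := by
  rw [mul_comm, Complex.exp_ofReal_mul_I_im]

lemma integral_pi4_mul {E : Type*} [MeasurableSpace E] (π : Measure E) [SigmaFinite π]
    (f0 f1 f2 f3 : E → ℂ) :
    ∫ z : Fin 4 → E, f0 (z 0) * f1 (z 1) * f2 (z 2) * f3 (z 3) ∂(Measure.pi fun _ => π)
      = (∫ x, f0 x ∂π) * (∫ x, f1 x ∂π) * (∫ x, f2 x ∂π) * (∫ x, f3 x ∂π) := by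
  letI : MeasureSpace E := ⟨π⟩
  have hsf : SigmaFinite (volume : Measure E) := ‹_›
  have h := MeasureTheory.integral_fin_nat_prod_eq_prod (n := 4) (E := fun _ => E) (μ := fun _ => π) ![f0, f1, f2, f3]
  simp only [Fin.prod_univ_four, Matrix.cons_val_zero, Matrix.cons_val_one, Matrix.head_cons,
    Matrix.cons_val_two, Matrix.tail_cons, Matrix.cons_val_three] at h
  exact h

lemma integrable_pi4 {E : Type*} [MeasurableSpace E] (π : Measure E) [IsProbabilityMeasure π]
    {f0 f1 f2 f3 : E → ℂ} (h0 : Measurable f0) (h1 : Measurable f1) (h2 : Measurable f2)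
    (h3 : Measurable f3) (b0 : ∀ x, ‖f0 x‖ ≤ 1) (b1 : ∀ x, ‖f1 x‖ ≤ 1)
    (b2 : ∀ x, ‖f2 x‖ ≤ 1) (b3 : ∀ x, ‖f3 x‖ ≤ 1) :
    Integrable (fun z : Fin 4 → E => f0 (z 0) * f1 (z 1) * f2 (z 2) * f3 (z 3))
      (Measure.pi fun _ => π) := by
  refine (integrable_const (1 : ℝ)).mono' ?_ (ae_of_all _ fun z => ?_)
  · exact ((((h0.comp (measurable_pi_apply 0)).mul (h1.comp (measurable_pi_apply 1))).mul
      (h2.comp (measurable_pi_apply 2))).mul (h3.comp (measurable_pi_apply 3))).aestronglyMeasurable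
  · rw [norm_mul, norm_mul, norm_mul]
    have e0 := b0 (z 0); have e1 := b1 (z 1); have e2 := b2 (z 2); have e3 := b3 (z 3)
    have n0 := norm_nonneg (f0 (z 0)); have n1 := norm_nonneg (f1 (z 1))
    have n2 := norm_nonneg (f2 (z 2)); have n3 := norm_nonneg (f3 (z 3))
    have p01 : ‖f0 (z 0)‖ * ‖f1 (z 1)‖ ≤ 1 := mul_le_one₀ e0 n1 e1
    have p012 : ‖f0 (z 0)‖ * ‖f1 (z 1)‖ * ‖f2 (z 2)‖ ≤ 1 := mul_le_one₀ p01 n2 e2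
    exact mul_le_one₀ p012 n3 e3

lemma final_alg (F F' g h : ℂ) :
    ((F' * 1 * 1 * (starRingEnd ℂ) F' - F * 1 * (starRingEnd ℂ) h * (starRingEnd ℂ) g
        - (starRingEnd ℂ) h * (starRingEnd ℂ) g * 1 * F
        + h * (starRingEnd ℂ) g * (starRingEnd ℂ) h * g).re
      + (F * 1 * 1 * (starRingEnd ℂ) F - F' * 1 * h * (starRingEnd ℂ) g
        - h * (starRingEnd ℂ) g * 1 * F' + (starRingEnd ℂ) h * (starRingEnd ℂ) g * h * g).re) / 2
    = (Complex.normSq (F - g * h) + Complex.normSq (F' - g * (starRingEnd ℂ) h)) / 2 := by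
  simp only [Complex.normSq_apply, Complex.mul_re, Complex.mul_im, Complex.sub_re, Complex.sub_im,
    Complex.add_re, Complex.add_im, Complex.conj_re, Complex.conj_im, Complex.one_re,
    Complex.one_im]
  ring

set_option maxHeartbeats 1600000 in
lemma pointwise_Ck {m n : ℕ} (s : EuclideanSpace ℝ (Fin m)) (t : EuclideanSpace ℝ (Fin n))
    (z : Fin 4 → EuclideanSpace ℝ (Fin m) × EuclideanSpace ℝ (Fin n)) :
    Ck s t z = (((eS s (z 0) * (starRingEnd ℂ) (eT t (z 0))) * 1 * 1 * ((starRingEnd ℂ) (eS s (z 3) * (starRingEnd ℂ) (eT t (z 3)))) - (eS s (z 0) * eT t (z 0)) * 1 * (starRingEnd ℂ) (eT t (z 2)) * (starRingEnd ℂ) (eS s (z 3)) - (starRingEnd ℂ) (eT t (z 0)) * (starRingEnd ℂ) (eS s (z 1)) * 1 * (eS s (z 3) * eT t (z 3)) + eT t (z 0) * (starRingEnd ℂ) (eS s (z 1)) * (starRingEnd ℂ) (eT t (z 2)) * eS s (z 3)).re + ((eS s (z 0) * eT t (z 0)) * 1 * 1 * ((starRingEnd ℂ) (eS s (z 3) *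 eT t (z 3))) - (eS s (z 0) * (starRingEnd ℂ) (eT t (z 0))) * 1 * eT t (z 2) * (starRingEnd ℂ) (eS s (z 3)) - eT t (z 0) * (starRingEnd ℂ) (eS s (z 1)) * 1 * (eS s (z 3) * (starRingEnd ℂ) (eT t (z 3))) + (starRingEnd ℂ) (eT t (z 0)) * (starRingEnd ℂ) (eS s (z 1)) * eT t (z 2) * eS s (z 3)).re) / 2 := by
  simp only [Ck, eS, eT, inner_sub_right, Real.cos_sub, map_mul, Complex.mul_re, Complex.mul_im,
    Complex.conj_re, Complex.conj_im, expI_re, expI_im, Complex.one_re, Complex.one_im,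
    Complex.sub_re, Complex.sub_im, Complex.add_re, Complex.add_im, mul_one, mul_zero, zero_mul,
    sub_zero, zero_sub, add_zero, zero_add, neg_neg, neg_mul, mul_neg]
  ring

set_option maxHeartbeats 10000000 in
lemma key {m n : ℕ} (π : Measure (EuclideanSpace ℝ (Fin m) × EuclideanSpace ℝ (Fin n)))
    [IsProbabilityMeasure π] (s : EuclideanSpace ℝ (Fin m)) (t : EuclideanSpace ℝ (Fin n)) :
    ∫ z, Ck s t z ∂(Measure.pi fun _ : Fin 4 => π)
      = (Complex.normSq ((∫ x, eS s x * eT t x ∂π) - (∫ x, eS s x ∂π) * ∫ x, eT t x ∂π)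
        + Complex.normSq ((∫ x, eS s x * (starRingEnd ℂ) (eT t x) ∂π)
            - (∫ x, eS s x ∂π) * (starRingEnd ℂ) (∫ x, eT t x ∂π))) / 2 := by
  have mS : Measurable (eS (n := n) s) := measurable_eS s
  have mT : Measurable (eT (m := m) t) := measurable_eT t
  have bS : ∀ x, ‖eS (n := n) s x‖ ≤ 1 := fun x => le_of_eq (norm_expI _)
  have bT : ∀ x, ‖eT (m := m) t x‖ ≤ 1 := fun x => le_of_eq (norm_expI _)
  have bmul : ∀ {a b : ℂ}, ‖a‖ ≤ 1 → ‖b‖ ≤ 1 → ‖a * b‖ ≤ 1 := fun ha hb => by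
    rw [norm_mul]; exact mul_le_one₀ ha (norm_nonneg _) hb
  have bconj : ∀ {a : ℂ}, ‖a‖ ≤ 1 → ‖(starRingEnd ℂ) a‖ ≤ 1 := fun ha => by
    rwa [RCLike.norm_conj]
  have mF : Measurable fun x => eS s x * eT t x := mS.mul mT
  have mF' : Measurable fun x => eS s x * (starRingEnd ℂ) (eT t x) := mS.mul (measurable_conj' mT)
  have mcS : Measurable fun x => (starRingEnd ℂ) (eS s x) := measurable_conj' mS
  have mcT : Measurable fun x => (starRingEnd ℂ) (eT t x) := measurable_conj' mT
  have mone : Measurable fun _ : EuclideanSpace ℝ (Fin m) × EuclideanSpace ℝ (Fin n) => (1 : ℂ) :=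
    measurable_const
  have bone : ∀ x : EuclideanSpace ℝ (Fin m) × EuclideanSpace ℝ (Fin n), ‖(1 : ℂ)‖ ≤ 1 :=
    fun _ => by simp
  have iA := integrable_pi4 π mF' mone mone (measurable_conj' mF') (fun x => bmul (bS x) (bconj (bT x))) bone bone (fun x => bconj (bmul (bS x) (bconj (bT x))))
  have iB := integrable_pi4 π mF mone mcT mcS (fun x => bmul (bS x) (bT x)) bone (fun x => bconj (bT x)) (fun x => bconj (bS x))
  have iC := integrable_pi4 π mcT mcS mone mF (fun x => bconj (bT x)) (fun x => bconj (bS x)) bone (fun x => bmul (bS x) (bT x))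
  have iD := integrable_pi4 π mT mcS mcT mS bT (fun x => bconj (bS x)) (fun x => bconj (bT x)) bS
  have iA2 := integrable_pi4 π mF mone mone (measurable_conj' mF) (fun x => bmul (bS x) (bT x)) bone bone (fun x => bconj (bmul (bS x) (bT x)))
  have iB2 := integrable_pi4 π mF' mone mT mcS (fun x => bmul (bS x) (bconj (bT x))) bone bT (fun x => bconj (bS x))
  have iC2 := integrable_pi4 π mT mcS mone mF' bT (fun x => bconj (bS x)) bone (fun x => bmul (bS x) (bconj (bT x)))
  have iD2 := integrable_pi4 π mcT mcS mT mS (fun x => bconj (bT x)) (fun x => bconj (bS x)) bT bS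
  have iAB : Integrable (fun z => (eS s (z 0) * (starRingEnd ℂ) (eT t (z 0))) * 1 * 1 * ((starRingEnd ℂ) (eS s (z 3) * (starRingEnd ℂ) (eT t (z 3)))) - (eS s (z 0) * eT t (z 0)) * 1 * (starRingEnd ℂ) (eT t (z 2)) * (starRingEnd ℂ) (eS s (z 3))) (Measure.pi fun _ : Fin 4 => π) := iA.sub iB
  have iABC : Integrable (fun z => (eS s (z 0) * (starRingEnd ℂ) (eT t (z 0))) * 1 * 1 * ((starRingEnd ℂ) (eS s (z 3) * (starRingEnd ℂ) (eT t (z 3)))) - (eS s (z 0) * eT t (z 0)) * 1 * (starRingEnd ℂ) (eT t (z 2)) * (starRingEnd ℂ) (eS s (z 3)) - (starRingEnd ℂ) (eT t (z 0)) * (starRingEnd ℂ) (eS s (z 1)) * 1 * (eS s (z 3) * eT t (z 3))) (Measure.pi fun _ : Fin 4 => π) := iAB.sub iC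
  have iABCD : Integrable (fun z => (eS s (z 0) * (starRingEnd ℂ) (eT t (z 0))) * 1 * 1 * ((starRingEnd ℂ) (eS s (z 3) * (starRingEnd ℂ) (eT t (z 3)))) - (eS s (z 0) * eT t (z 0)) * 1 * (starRingEnd ℂ) (eT t (z 2)) * (starRingEnd ℂ) (eS s (z 3)) - (starRingEnd ℂ) (eT t (z 0)) * (starRingEnd ℂ) (eS s (z 1)) * 1 * (eS s (z 3) * eT t (z 3)) + eT t (z 0) * (starRingEnd ℂ) (eS s (z 1)) * (starRingEnd ℂ) (eT t (z 2)) * eS s (z 3)) (Measure.pi fun _ : Fin 4 => π) := iABC.add iD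
  have iAB2 : Integrable (fun z => (eS s (z 0) * eT t (z 0)) * 1 * 1 * ((starRingEnd ℂ) (eS s (z 3) * eT t (z 3))) - (eS s (z 0) * (starRingEnd ℂ) (eT t (z 0))) * 1 * eT t (z 2) * (starRingEnd ℂ) (eS s (z 3))) (Measure.pi fun _ : Fin 4 => π) := iA2.sub iB2
  have iABC2 : Integrable (fun z => (eS s (z 0) * eT t (z 0)) * 1 * 1 * ((starRingEnd ℂ) (eS s (z 3) * eT t (z 3))) - (eS s (z 0) * (starRingEnd ℂ) (eT t (z 0))) * 1 * eT t (z 2) * (starRingEnd ℂ) (eS s (z 3)) - eT t (z 0) * (starRingEnd ℂ) (eS s (z 1)) * 1 * (eS s (z 3) * (starRingEnd ℂ) (eT t (z 3)))) (Measure.pi fun _ : Fin 4 => π) := iAB2.sub iC2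
  have iABCD2 : Integrable (fun z => (eS s (z 0) * eT t (z 0)) * 1 * 1 * ((starRingEnd ℂ) (eS s (z 3) * eT t (z 3))) - (eS s (z 0) * (starRingEnd ℂ) (eT t (z 0))) * 1 * eT t (z 2) * (starRingEnd ℂ) (eS s (z 3)) - eT t (z 0) * (starRingEnd ℂ) (eS s (z 1)) * 1 * (eS s (z 3) * (starRingEnd ℂ) (eT t (z 3))) + (starRingEnd ℂ) (eT t (z 0)) * (starRingEnd ℂ) (eS s (z 1)) * eT t (z 2) * eS s (z 3)) (Measure.pi fun _ : Fin 4 => π) := iABC2.add iD2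
  have iRe1 : Integrable (fun z => ((eS s (z 0) * (starRingEnd ℂ) (eT t (z 0))) * 1 * 1 * ((starRingEnd ℂ) (eS s (z 3) * (starRingEnd ℂ) (eT t (z 3)))) - (eS s (z 0) * eT t (z 0)) * 1 * (starRingEnd ℂ) (eT t (z 2)) * (starRingEnd ℂ) (eS s (z 3)) - (starRingEnd ℂ) (eT t (z 0)) * (starRingEnd ℂ) (eS s (z 1)) * 1 * (eS s (z 3) * eT t (z 3)) + eT t (z 0) * (starRingEnd ℂ) (eS s (z 1)) * (starRingEnd ℂ) (eT t (z 2)) * eS s (z 3)).re) (Measure.pi fun _ : Fin 4 => π) := iABCD.re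
  have iRe2 : Integrable (fun z => ((eS s (z 0) * eT t (z 0)) * 1 * 1 * ((starRingEnd ℂ) (eS s (z 3) * eT t (z 3))) - (eS s (z 0) * (starRingEnd ℂ) (eT t (z 0))) * 1 * eT t (z 2) * (starRingEnd ℂ) (eS s (z 3)) - eT t (z 0) * (starRingEnd ℂ) (eS s (z 1)) * 1 * (eS s (z 3) * (starRingEnd ℂ) (eT t (z 3))) + (starRingEnd ℂ) (eT t (z 0)) * (starRingEnd ℂ) (eS s (z 1)) * eT t (z 2) * eS s (z 3)).re) (Measure.pi fun _ : Fin 4 => π) := iABCD2.re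
  have hre1 : (∫ z, ((eS s (z 0) * (starRingEnd ℂ) (eT t (z 0))) * 1 * 1 * ((starRingEnd ℂ) (eS s (z 3) * (starRingEnd ℂ) (eT t (z 3)))) - (eS s (z 0) * eT t (z 0)) * 1 * (starRingEnd ℂ) (eT t (z 2)) * (starRingEnd ℂ) (eS s (z 3)) - (starRingEnd ℂ) (eT t (z 0)) * (starRingEnd ℂ) (eS s (z 1)) * 1 * (eS s (z 3) * eT t (z 3)) + eT t (z 0) * (starRingEnd ℂ) (eS s (z 1)) * (starRingEnd ℂ) (eT t (z 2)) * eS s (z 3)).re ∂(Measure.pi fun _ : Fin 4 => π)) = (∫ z, ((eS s (z 0) * (starRingEnd ℂ) (eT t (z 0))) * 1 * 1 * ((starRingEnd ℂ) (eS s (z 3) * (starRingEnd ℂ) (eT t (z 3)))) - (eS s (z 0) * eT t (z 0)) * 1 * (starRingEnd ℂ) (eT t (z 2)) * (starRingEnd ℂ) (eS s (z 3)) - (starRingEnd ℂ) (eT t (z 0)) * (starRingEnd ℂ) (eS s (z 1)) * 1 * (eS s (z 3) * eT t (z 3)) + eT t (z 0) * (starRingEnd ℂ) (eS s (z 1)) *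 (starRingEnd ℂ) (eT t (z 2)) * eS s (z 3)) ∂(Measure.pi fun _ : Fin 4 => π)).re := integral_re iABCD
  have hre2 : (∫ z, ((eS s (z 0) * eT t (z 0)) * 1 * 1 * ((starRingEnd ℂ) (eS s (z 3) * eT t (z 3))) - (eS s (z 0) * (starRingEnd ℂ) (eT t (z 0))) * 1 * eT t (z 2) * (starRingEnd ℂ) (eS s (z 3)) - eT t (z 0) * (starRingEnd ℂ) (eS s (z 1)) * 1 * (eS s (z 3) * (starRingEnd ℂ) (eT t (z 3))) + (starRingEnd ℂ) (eT t (z 0)) * (starRingEnd ℂ) (eS s (z 1)) * eT t (z 2) * eS s (z 3)).re ∂(Measure.pi fun _ : Fin 4 => π)) = (∫ z, ((eS s (z 0) * eT t (z 0)) * 1 * 1 * ((starRingEnd ℂ) (eS s (z 3) * eT t (z 3))) - (eS s (z 0) * (starRingEnd ℂ) (eT t (z 0))) * 1 * eT t (z 2) * (starRingEnd ℂ) (eS s (z 3)) - eT t (z 0) * (starRingEnd ℂ) (eS s (z 1)) * 1 * (eS s (z 3) * (starRingEnd ℂ) (eT t (z 3))) + (starRingEnd ℂ) (eT t (z 0))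 * (starRingEnd ℂ) (eS s (z 1)) * eT t (z 2) * eS s (z 3)) ∂(Measure.pi fun _ : Fin 4 => π)).re := integral_re iABCD2
  have hsplit1 : (∫ z, ((eS s (z 0) * (starRingEnd ℂ) (eT t (z 0))) * 1 * 1 * ((starRingEnd ℂ) (eS s (z 3) * (starRingEnd ℂ) (eT t (z 3)))) - (eS s (z 0) * eT t (z 0)) * 1 * (starRingEnd ℂ) (eT t (z 2)) * (starRingEnd ℂ) (eS s (z 3)) - (starRingEnd ℂ) (eT t (z 0)) * (starRingEnd ℂ) (eS s (z 1)) * 1 * (eS s (z 3) * eT t (z 3)) + eT t (z 0) * (starRingEnd ℂ) (eS s (z 1)) * (starRingEnd ℂ) (eT t (z 2)) * eS s (z 3)) ∂(Measure.pi fun _ : Fin 4 => π))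
      = (∫ z, (eS s (z 0) * (starRingEnd ℂ) (eT t (z 0))) * 1 * 1 * ((starRingEnd ℂ) (eS s (z 3) * (starRingEnd ℂ) (eT t (z 3)))) ∂(Measure.pi fun _ : Fin 4 => π)) - (∫ z, (eS s (z 0) * eT t (z 0)) * 1 * (starRingEnd ℂ) (eT t (z 2)) * (starRingEnd ℂ) (eS s (z 3)) ∂(Measure.pi fun _ : Fin 4 => π)) - (∫ z, (starRingEnd ℂ) (eT t (z 0)) * (starRingEnd ℂ) (eS s (z 1)) * 1 * (eS s (z 3) * eT t (z 3)) ∂(Measure.pi fun _ : Fin 4 => π))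
        + ∫ z, eT t (z 0) * (starRingEnd ℂ) (eS s (z 1)) * (starRingEnd ℂ) (eT t (z 2)) * eS s (z 3) ∂(Measure.pi fun _ : Fin 4 => π) := by
    rw [integral_add iABC iD, integral_sub iAB iC, integral_sub iA iB]
  have hsplit2 : (∫ z, ((eS s (z 0) * eT t (z 0)) * 1 * 1 * ((starRingEnd ℂ) (eS s (z 3) * eT t (z 3))) - (eS s (z 0) * (starRingEnd ℂ) (eT t (z 0))) * 1 * eT t (z 2) * (starRingEnd ℂ) (eS s (z 3)) - eT t (z 0) * (starRingEnd ℂ) (eS s (z 1)) * 1 * (eS s (z 3) * (starRingEnd ℂ) (eT t (z 3))) + (starRingEnd ℂ) (eT t (z 0)) * (starRingEnd ℂ) (eS s (z 1)) * eT t (z 2) * eS s (z 3)) ∂(Measure.pi fun _ : Fin 4 => π))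
      = (∫ z, (eS s (z 0) * eT t (z 0)) * 1 * 1 * ((starRingEnd ℂ) (eS s (z 3) * eT t (z 3))) ∂(Measure.pi fun _ : Fin 4 => π)) - (∫ z, (eS s (z 0) * (starRingEnd ℂ) (eT t (z 0))) * 1 * eT t (z 2) * (starRingEnd ℂ) (eS s (z 3)) ∂(Measure.pi fun _ : Fin 4 => π)) - (∫ z, eT t (z 0) * (starRingEnd ℂ) (eS s (z 1)) * 1 * (eS s (z 3) * (starRingEnd ℂ) (eT t (z 3))) ∂(Measure.pi fun _ : Fin 4 => π))
        + ∫ z, (starRingEnd ℂ) (eT t (z 0)) * (starRingEnd ℂ) (eS s (z 1)) * eT t (z 2) * eS s (z 3) ∂(Measure.pi fun _ : Fin 4 => π) := by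
    rw [integral_add iABC2 iD2, integral_sub iAB2 iC2, integral_sub iA2 iB2]
  have hA : (∫ z, (eS s (z 0) * (starRingEnd ℂ) (eT t (z 0))) * 1 * 1 * ((starRingEnd ℂ) (eS s (z 3) * (starRingEnd ℂ) (eT t (z 3)))) ∂(Measure.pi fun _ : Fin 4 => π)) = (∫ x, eS s x * (starRingEnd ℂ) (eT t x) ∂π) * (∫ x, (1 : ℂ) ∂π) * (∫ x, (1 : ℂ) ∂π) * (∫ x, (starRingEnd ℂ) (eS s x * (starRingEnd ℂ) (eT t x)) ∂π) :=
    integral_pi4_mul π (fun x => eS s x * (starRingEnd ℂ) (eT t x)) (fun _ => (1 : ℂ)) (fun _ => (1 : ℂ)) (fun x => (starRingEnd ℂ) (eS s x * (starRingEnd ℂ) (eT t x)))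
  have hB : (∫ z, (eS s (z 0) * eT t (z 0)) * 1 * (starRingEnd ℂ) (eT t (z 2)) * (starRingEnd ℂ) (eS s (z 3)) ∂(Measure.pi fun _ : Fin 4 => π)) = (∫ x, eS s x * eT t x ∂π) * (∫ x, (1 : ℂ) ∂π) * (∫ x, (starRingEnd ℂ) (eT t x) ∂π) * (∫ x, (starRingEnd ℂ) (eS s x) ∂π) :=
    integral_pi4_mul π (fun x => eS s x * eT t x) (fun _ => (1 : ℂ)) (fun x => (starRingEnd ℂ) (eT t x)) (fun x => (starRingEnd ℂ) (eS s x))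
  have hC : (∫ z, (starRingEnd ℂ) (eT t (z 0)) * (starRingEnd ℂ) (eS s (z 1)) * 1 * (eS s (z 3) * eT t (z 3)) ∂(Measure.pi fun _ : Fin 4 => π)) = (∫ x, (starRingEnd ℂ) (eT t x) ∂π) * (∫ x, (starRingEnd ℂ) (eS s x) ∂π) * (∫ x, (1 : ℂ) ∂π) * (∫ x, eS s x * eT t x ∂π) :=
    integral_pi4_mul π (fun x => (starRingEnd ℂ) (eT t x)) (fun x => (starRingEnd ℂ) (eS s x)) (fun _ => (1 : ℂ)) (fun x => eS s x * eT t x)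
  have hD : (∫ z, eT t (z 0) * (starRingEnd ℂ) (eS s (z 1)) * (starRingEnd ℂ) (eT t (z 2)) * eS s (z 3) ∂(Measure.pi fun _ : Fin 4 => π)) = (∫ x, eT t x ∂π) * (∫ x, (starRingEnd ℂ) (eS s x) ∂π) * (∫ x, (starRingEnd ℂ) (eT t x) ∂π) * (∫ x, eS s x ∂π) :=
    integral_pi4_mul π (fun x => eT t x) (fun x => (starRingEnd ℂ) (eS s x)) (fun x => (starRingEnd ℂ) (eT t x)) (fun x => eS s x)
  have hA2 : (∫ z, (eS s (z 0) * eT t (z 0)) * 1 * 1 * ((starRingEnd ℂ) (eS s (z 3) * eT t (z 3))) ∂(Measure.pi fun _ : Fin 4 => π)) = (∫ x, eS s x * eT t x ∂π) * (∫ x, (1 : ℂ) ∂π) * (∫ x, (1 : ℂ) ∂π) * (∫ x, (starRingEnd ℂ) (eS s x * eT t x) ∂π) :=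
    integral_pi4_mul π (fun x => eS s x * eT t x) (fun _ => (1 : ℂ)) (fun _ => (1 : ℂ)) (fun x => (starRingEnd ℂ) (eS s x * eT t x))
  have hB2 : (∫ z, (eS s (z 0) * (starRingEnd ℂ) (eT t (z 0))) * 1 * eT t (z 2) * (starRingEnd ℂ) (eS s (z 3)) ∂(Measure.pi fun _ : Fin 4 => π)) = (∫ x, eS s x * (starRingEnd ℂ) (eT t x) ∂π) * (∫ x, (1 : ℂ) ∂π) * (∫ x, eT t x ∂π) * (∫ x, (starRingEnd ℂ) (eS s x) ∂π) :=
    integral_pi4_mul π (fun x => eS s x * (starRingEnd ℂ) (eT t x)) (fun _ => (1 : ℂ)) (fun x => eT t x) (fun x => (starRingEnd ℂ) (eS s x))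
  have hC2 : (∫ z, eT t (z 0) * (starRingEnd ℂ) (eS s (z 1)) * 1 * (eS s (z 3) * (starRingEnd ℂ) (eT t (z 3))) ∂(Measure.pi fun _ : Fin 4 => π)) = (∫ x, eT t x ∂π) * (∫ x, (starRingEnd ℂ) (eS s x) ∂π) * (∫ x, (1 : ℂ) ∂π) * (∫ x, eS s x * (starRingEnd ℂ) (eT t x) ∂π) :=
    integral_pi4_mul π (fun x => eT t x) (fun x => (starRingEnd ℂ) (eS s x)) (fun _ => (1 : ℂ)) (fun x => eS s x * (starRingEnd ℂ) (eT t x))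
  have hD2 : (∫ z, (starRingEnd ℂ) (eT t (z 0)) * (starRingEnd ℂ) (eS s (z 1)) * eT t (z 2) * eS s (z 3) ∂(Measure.pi fun _ : Fin 4 => π)) = (∫ x, (starRingEnd ℂ) (eT t x) ∂π) * (∫ x, (starRingEnd ℂ) (eS s x) ∂π) * (∫ x, eT t x ∂π) * (∫ x, eS s x ∂π) :=
    integral_pi4_mul π (fun x => (starRingEnd ℂ) (eT t x)) (fun x => (starRingEnd ℂ) (eS s x)) (fun x => eT t x) (fun x => eS s x)
  have hone : (∫ x : EuclideanSpace ℝ (Fin m) × EuclideanSpace ℝ (Fin n), (1 : ℂ) ∂π) = 1 := by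
    simp
  have hcF : (∫ x, (starRingEnd ℂ) (eS s x * eT t x) ∂π) = (starRingEnd ℂ) (∫ x, eS s x * eT t x ∂π) := integral_conj
  have hcF' : (∫ x, (starRingEnd ℂ) (eS s x * (starRingEnd ℂ) (eT t x)) ∂π) = (starRingEnd ℂ) (∫ x, eS s x * (starRingEnd ℂ) (eT t x) ∂π) := integral_conj
  have hcg : (∫ x, (starRingEnd ℂ) (eS s x) ∂π) = (starRingEnd ℂ) (∫ x, eS s x ∂π) := integral_conj
  have hch : (∫ x, (starRingEnd ℂ) (eT t x) ∂π) = (starRingEnd ℂ) (∫ x, eT t x ∂π) := integral_conj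
  rw [integral_congr_ae (ae_of_all _ fun z => pointwise_Ck s t z), integral_div,
    integral_add iRe1 iRe2, hre1, hre2, hsplit1, hsplit2, hA, hB, hC, hD, hA2, hB2, hC2, hD2,
    hone, hcF, hcF', hcg, hch]
  exact final_alg (∫ x, eS s x * eT t x ∂π) (∫ x, eS s x * (starRingEnd ℂ) (eT t x) ∂π) (∫ x, eS s x ∂π) (∫ x, eT t x ∂π)

lemma norm_eS {m n : ℕ} (s : EuclideanSpace ℝ (Fin m))
    (p : EuclideanSpace ℝ (Fin m) × EuclideanSpace ℝ (Fin n)) : ‖eS s p‖ = 1 := norm_expI _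

lemma norm_eT {m n : ℕ} (t : EuclideanSpace ℝ (Fin n))
    (p : EuclideanSpace ℝ (Fin m) × EuclideanSpace ℝ (Fin n)) : ‖eT t p‖ = 1 := norm_expI _

lemma conj_eT {m n : ℕ} (t : EuclideanSpace ℝ (Fin n))
    (p : EuclideanSpace ℝ (Fin m) × EuclideanSpace ℝ (Fin n)) :
    (starRingEnd ℂ) (eT t p) = eT (-t) p := by
  rw [eT, eT, ← Complex.exp_conj]
  congr 1
  simp [inner_neg_left]

lemma abs_Ck_le {m n : ℕ} (s : EuclideanSpace ℝ (Fin m)) (t : EuclideanSpace ℝ (Fin n)) (z) :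
    |Ck s t z| ≤ 4 := by
  rw [Ck, abs_mul]
  have key : ∀ a b : ℝ, |Real.cos a - Real.cos b| ≤ 2 := by
    intro a b
    have h1 := Real.abs_cos_le_one a
    have h2 := Real.abs_cos_le_one b
    calc |Real.cos a - Real.cos b| ≤ |Real.cos a| + |Real.cos b| := abs_sub _ _
    _ ≤ 2 := by linarith
  calc |Real.cos ⟪s, (z 0).1 - (z 3).1⟫ - Real.cos ⟪s, (z 3).1 - (z 1).1⟫| *
        |Real.cos ⟪t, (z 3).2 - (z 0).2⟫ - Real.cos ⟪t, (z 0).2 - (z 2).2⟫|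
      ≤ 2 * 2 := mul_le_mul (key _ _) (key _ _) (abs_nonneg _) (by norm_num)
  _ = 4 := by norm_num

lemma measurable_Ck_joint {m n : ℕ} :
    Measurable (fun q : (EuclideanSpace ℝ (Fin m) × EuclideanSpace ℝ (Fin n)) ×
      (Fin 4 → EuclideanSpace ℝ (Fin m) × EuclideanSpace ℝ (Fin n)) => Ck q.1.1 q.1.2 q.2) := by
  unfold Ck
  have hz : ∀ i : Fin 4, Measurable (fun q : (EuclideanSpace ℝ (Fin m) ×
      EuclideanSpace ℝ (Fin n)) × (Fin 4 → EuclideanSpace ℝ (Fin m) ×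
      EuclideanSpace ℝ (Fin n)) => q.2 i) :=
    fun i => (measurable_pi_apply i).comp measurable_snd
  refine Measurable.mul (Measurable.sub ?_ ?_) (Measurable.sub ?_ ?_) <;>
    apply Real.measurable_cos.comp
  · exact (measurable_fst.comp measurable_fst).inner (((hz 0).fst).sub ((hz 3).fst))
  · exact (measurable_fst.comp measurable_fst).inner (((hz 3).fst).sub ((hz 1).fst))
  · exact (measurable_snd.comp measurable_fst).inner (((hz 3).snd).sub ((hz 0).snd))
  · exact (measurable_snd.comp measurable_fst).inner (((hz 0).snd).sub ((hz 2).snd))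


lemma gdaux_integral_cos {d : ℕ} (ρ : Measure (EuclideanSpace ℝ (Fin d))) [IsFiniteMeasure ρ]
    (v : EuclideanSpace ℝ (Fin d)) :
    ∫ r, Real.cos ⟪r, v⟫ ∂ρ = (ρ Set.univ).toReal - realCndf ρ v := by
  have hm : Measurable fun r : EuclideanSpace ℝ (Fin d) => Real.cos ⟪v, r⟫ :=
    Real.measurable_cos.comp (Measurable.inner measurable_const measurable_id)
  have hint : Integrable (fun r : EuclideanSpace ℝ (Fin d) => Real.cos ⟪v, r⟫) ρ :=
    (integrable_const 1).mono' hm.aestronglyMeasurable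
      (ae_of_all _ fun r => by rw [Real.norm_eq_abs]; exact Real.abs_cos_le_one _)
  have hcomm : ∀ r : EuclideanSpace ℝ (Fin d), ⟪r, v⟫ = ⟪v, r⟫ := fun r => real_inner_comm v r
  simp_rw [realCndf, integral_sub (integrable_const 1) hint, integral_const, smul_eq_mul,
    mul_one, hcomm]
  simp only [measureReal_def]; ring

lemma gdaux_integrable_cos {d : ℕ} (ρ : Measure (EuclideanSpace ℝ (Fin d))) [IsFiniteMeasure ρ]
    (v : EuclideanSpace ℝ (Fin d)) :
    Integrable (fun r : EuclideanSpace ℝ (Fin d) => Real.cos ⟪r, v⟫) ρ :=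
  (integrable_const 1).mono'
    (Real.measurable_cos.comp (Measurable.inner measurable_id measurable_const)).aestronglyMeasurable
    (ae_of_all _ fun r => by rw [Real.norm_eq_abs]; exact Real.abs_cos_le_one _)

lemma gdaux_measurable_realCndf {d : ℕ} (ρ : Measure (EuclideanSpace ℝ (Fin d))) [SFinite ρ] :
    Measurable (realCndf ρ) := by
  have h : StronglyMeasurable fun u : EuclideanSpace ℝ (Fin d) =>
      ∫ r, (1 - Real.cos ⟪u, r⟫) ∂ρ := by
    apply MeasureTheory.StronglyMeasurable.integral_prod_right'
      (f := fun q : EuclideanSpace ℝ (Fin d) × EuclideanSpace ℝ (Fin d) => 1 - Real.cos ⟪q.1, q.2⟫)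
    exact (measurable_const.sub (Real.measurable_cos.comp
      (Measurable.inner measurable_fst measurable_snd))).stronglyMeasurable
  exact h.measurable


end GdcovAux

/-- For finite symmetric Lévy measures `μ, ν` with full support and i.i.d. copies
`(X_i, Y_i)`, `i = 1, …, 4`, of `(X, Y)` (below indexed `0, …, 3`), the generalized
distance covariance satisfies
`V²(X,Y) = E[(Φ(X₁-X₄) - Φ(X₄-X₂)) · (Ψ(Y₄-Y₁) - Ψ(Y₁-Y₃))]`. -/
theorem gdCov_eq_product_expectation {m n : ℕ}
    (μ : Measure (EuclideanSpace ℝ (Fin m))) (ν : Measure (EuclideanSpace ℝ (Fin n)))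
    [IsFiniteMeasure μ] [IsFiniteMeasure ν]
    (hμ0 : μ {0} = 0) (hν0 : ν {0} = 0)
    (hμsym : IsSymmetricMeasure μ) (hνsym : IsSymmetricMeasure ν)
    (hμfull : HasFullSupportOffZero μ) (hνfull : HasFullSupportOffZero ν)
    {Ω : Type*} [MeasurableSpace Ω] (P : Measure Ω) [IsProbabilityMeasure P]
    (X : Ω → EuclideanSpace ℝ (Fin m)) (Y : Ω → EuclideanSpace ℝ (Fin n))
    (hX : Measurable X) (hY : Measurable Y)
    (X' : Fin 4 → Ω → EuclideanSpace ℝ (Fin m))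
    (Y' : Fin 4 → Ω → EuclideanSpace ℝ (Fin n))
    (hX' : ∀ i, Measurable (X' i)) (hY' : ∀ i, Measurable (Y' i))
    (hiid : iIndepFun (fun i ω => (X' i ω, Y' i ω)) P)
    (hid : ∀ i, IdentDistrib (fun ω => (X' i ω, Y' i ω)) (fun ω => (X ω, Y ω)) P P) :
    (gdCov μ ν P X Y).toReal
      = ∫ ω, (realCndf μ (X' 0 ω - X' 3 ω) - realCndf μ (X' 3 ω - X' 1 ω))
          * (realCndf ν (Y' 3 ω - Y' 0 ω) - realCndf ν (Y' 0 ω - Y' 2 ω)) ∂P := by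
  have hνsym' : ν.map (fun r => -r) = ν := hνsym
  have hZmeas : Measurable fun ω => (X ω, Y ω) := hX.prodMk hY
  set π : Measure (EuclideanSpace ℝ (Fin m) × EuclideanSpace ℝ (Fin n)) :=
    P.map (fun ω => (X ω, Y ω)) with hπ
  haveI : IsProbabilityMeasure π := Measure.isProbabilityMeasure_map hZmeas.aemeasurable
  set κ : Measure (Fin 4 → EuclideanSpace ℝ (Fin m) × EuclideanSpace ℝ (Fin n)) :=
    Measure.pi (fun _ : Fin 4 => π) with hκ
  haveI : IsProbabilityMeasure κ := by rw [hκ]; infer_instance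
  -- identification of the integrals over π with characteristic functions
  have hgchar : ∀ s, ∫ p, eS s p ∂π = charFn P X s := by
    intro s
    rw [hπ, integral_map hZmeas.aemeasurable (measurable_eS s).aestronglyMeasurable]
    rfl
  have hhchar : ∀ t, ∫ p, eT t p ∂π = charFn P Y t := by
    intro t
    rw [hπ, integral_map hZmeas.aemeasurable (measurable_eT t).aestronglyMeasurable]
    rfl
  have hFchar : ∀ s t, ∫ p, eS s p * eT t p ∂π = jointCharFn P X Y s t := by
    intro s t
    rw [hπ, integral_map hZmeas.aemeasurable
      (show Measurable (fun p => eS s p * eT t p) from (measurable_eS s).mul (measurable_eT t)).aestronglyMeasurable]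
    unfold jointCharFn
    congr 1
    funext ω
    show Complex.exp (Complex.I * (⟪s, X ω⟫ : ℝ)) * Complex.exp (Complex.I * (⟪t, Y ω⟫ : ℝ)) = _
    rw [← Complex.exp_add]
    congr 1
    push_cast
    ring
  have hF'char : ∀ s t, ∫ p, eS s p * (starRingEnd ℂ) (eT t p) ∂π
      = jointCharFn P X Y s (-t) := by
    intro s t
    have hc : ∀ p : EuclideanSpace ℝ (Fin m) × EuclideanSpace ℝ (Fin n),
        (starRingEnd ℂ) (eT t p) = eT (-t) p := fun p => conj_eT t p
    calc ∫ p, eS s p * (starRingEnd ℂ) (eT t p) ∂π = ∫ p, eS s p * eT (-t) p ∂π := by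
          simp_rw [hc]
    _ = _ := hFchar s (-t)
  have hconjh : ∀ t, charFn P Y (-t) = (starRingEnd ℂ) (charFn P Y t) := by
    intro t
    rw [← hhchar, ← hhchar]
    calc ∫ p, eT (-t) p ∂π = ∫ p, (starRingEnd ℂ) (eT t p) ∂π :=
          integral_congr_ae (ae_of_all _ fun p => (conj_eT t p).symm)
    _ = _ := integral_conj
  have normSq_eq : ∀ w : ℂ, Complex.normSq w = ‖w‖ ^ 2 := fun w => by
    rw [Complex.sq_norm]
  -- strong measurability of the characteristic functions
  have hjsm : StronglyMeasurable (fun q : EuclideanSpace ℝ (Fin m) × EuclideanSpace ℝ (Fin n) =>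
      jointCharFn P X Y q.1 q.2) := by
    have hf : Measurable (fun r : (EuclideanSpace ℝ (Fin m) × EuclideanSpace ℝ (Fin n)) × Ω =>
        Complex.exp (Complex.I * ((⟪r.1.1, X r.2⟫ + ⟪r.1.2, Y r.2⟫ : ℝ)))) := by
      apply Complex.measurable_exp.comp
      apply measurable_const.mul
      apply Complex.measurable_ofReal.comp
      exact ((Measurable.inner (measurable_fst.comp measurable_fst) (hX.comp measurable_snd)).add
        (Measurable.inner (measurable_snd.comp measurable_fst) (hY.comp measurable_snd)))
    exact hf.stronglyMeasurable.integral_prod_right'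
  have hgsm : StronglyMeasurable (charFn P X) := by
    have hf : Measurable (fun r : EuclideanSpace ℝ (Fin m) × Ω =>
        Complex.exp (Complex.I * (⟪r.1, X r.2⟫ : ℝ))) := by
      apply Complex.measurable_exp.comp
      apply measurable_const.mul
      apply Complex.measurable_ofReal.comp
      exact Measurable.inner measurable_fst (hX.comp measurable_snd)
    exact hf.stronglyMeasurable.integral_prod_right'
  have hhsm : StronglyMeasurable (charFn P Y) := by
    have hf : Measurable (fun r : EuclideanSpace ℝ (Fin n) × Ω =>
        Complex.exp (Complex.I * (⟪r.1, Y r.2⟫ : ℝ))) := by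
      apply Complex.measurable_exp.comp
      apply measurable_const.mul
      apply Complex.measurable_ofReal.comp
      exact Measurable.inner measurable_fst (hY.comp measurable_snd)
    exact hf.stronglyMeasurable.integral_prod_right'
  have hDsm : StronglyMeasurable (fun q : EuclideanSpace ℝ (Fin m) × EuclideanSpace ℝ (Fin n) =>
      (jointCharFn P X Y q.1 q.2 - charFn P X q.1 * charFn P Y q.2)) :=
    hjsm.sub ((hgsm.comp_measurable measurable_fst).mul (hhsm.comp_measurable measurable_snd))
  have hφsm : StronglyMeasurable
      (fun q : EuclideanSpace ℝ (Fin m) × EuclideanSpace ℝ (Fin n) =>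
        ‖(jointCharFn P X Y q.1 q.2 - charFn P X q.1 * charFn P Y q.2)‖ ^ 2) :=
    (continuous_pow 2).comp_stronglyMeasurable hDsm.norm
  -- bounds
  have hchar_le1 : ∀ s, ‖charFn P X s‖ ≤ 1 := by
    intro s
    have h := norm_integral_le_of_norm_le_const (μ := P) (C := 1)
      (f := fun ω => Complex.exp (Complex.I * (⟪s, X ω⟫ : ℝ)))
      (ae_of_all _ fun ω => le_of_eq (norm_expI _))
    rw [probReal_univ, mul_one] at h
    exact h
  have hchar_le2 : ∀ t, ‖charFn P Y t‖ ≤ 1 := by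
    intro t
    have h := norm_integral_le_of_norm_le_const (μ := P) (C := 1)
      (f := fun ω => Complex.exp (Complex.I * (⟪t, Y ω⟫ : ℝ)))
      (ae_of_all _ fun ω => le_of_eq (norm_expI _))
    rw [probReal_univ, mul_one] at h
    exact h
  have hjoint_le : ∀ s t, ‖jointCharFn P X Y s t‖ ≤ 1 := by
    intro s t
    have h := norm_integral_le_of_norm_le_const (μ := P) (C := 1)
      (f := fun ω => Complex.exp (Complex.I * ((⟪s, X ω⟫ + ⟪t, Y ω⟫ : ℝ))))
      (ae_of_all _ fun ω => le_of_eq (norm_expI _))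
    rw [probReal_univ, mul_one] at h
    exact h
  have hDle : ∀ s t, ‖(jointCharFn P X Y s t - charFn P X s * charFn P Y t)‖ ≤ 2 := by
    intro s t
    calc ‖(jointCharFn P X Y s t - charFn P X s * charFn P Y t)‖ ≤ ‖jointCharFn P X Y s t‖ + ‖charFn P X s * charFn P Y t‖ :=
          norm_sub_le _ _
    _ ≤ 1 + 1 := by
        gcongr
        · exact hjoint_le s t
        · rw [norm_mul]
          exact mul_le_one₀ (hchar_le1 s) (norm_nonneg _) (hchar_le2 t)
    _ = 2 := by norm_num
  have hφbdd : ∀ s t, ‖(jointCharFn P X Y s t - charFn P X s * charFn P Y t)‖ ^ 2 ≤ 4 := by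
    intro s t
    calc ‖(jointCharFn P X Y s t - charFn P X s * charFn P Y t)‖ ^ 2 ≤ 2 ^ 2 := by
          exact pow_le_pow_left₀ (norm_nonneg _) (hDle s t) 2
    _ = 4 := by norm_num
  have hφint : ∀ s, Integrable (fun t => ‖(jointCharFn P X Y s t - charFn P X s * charFn P Y t)‖ ^ 2) ν := by
    intro s
    refine (integrable_const (4 : ℝ)).mono'
      ((hφsm.comp_measurable measurable_prodMk_left).aestronglyMeasurable)
      (ae_of_all _ fun t => ?_)
    rw [Real.norm_eq_abs, abs_of_nonneg (sq_nonneg _)]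
    exact hφbdd s t
  have hφint' : ∀ s, Integrable (fun t => ‖(jointCharFn P X Y s (-t) - charFn P X s * charFn P Y (-t))‖ ^ 2) ν := by
    intro s
    refine (integrable_const (4 : ℝ)).mono'
      (((hφsm.comp_measurable measurable_prodMk_left).comp_measurable measurable_neg).aestronglyMeasurable)
      (ae_of_all _ fun t => ?_)
    rw [Real.norm_eq_abs, abs_of_nonneg (sq_nonneg _)]
    exact hφbdd s (-t)
  -- step 1 : from lintegral to Bochner integral
  have hIν : ∀ s, ∫⁻ t, (‖(jointCharFn P X Y s t - charFn P X s * charFn P Y t)‖₊ : ℝ≥0∞) ^ 2 ∂ν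
      = ENNReal.ofReal (∫ t, ‖(jointCharFn P X Y s t - charFn P X s * charFn P Y t)‖ ^ 2 ∂ν) := by
    intro s
    have hrw : ∀ t : EuclideanSpace ℝ (Fin n), ((‖(jointCharFn P X Y s t - charFn P X s * charFn P Y t)‖₊ : ℝ≥0∞)) ^ 2
        = ENNReal.ofReal (‖(jointCharFn P X Y s t - charFn P X s * charFn P Y t)‖ ^ 2) := fun t => by
      rw [← enorm_eq_nnnorm, ← ofReal_norm, ← ENNReal.ofReal_pow (norm_nonneg _)]
    simp_rw [hrw]
    rw [← ofReal_integral_eq_lintegral_ofReal (hφint s) (ae_of_all _ fun t => sq_nonneg _)]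
  have hFsm : StronglyMeasurable (fun s => ∫ t, ‖(jointCharFn P X Y s t - charFn P X s * charFn P Y t)‖ ^ 2 ∂ν) :=
    hφsm.integral_prod_right'
  have hFnn : ∀ s, 0 ≤ ∫ t, ‖(jointCharFn P X Y s t - charFn P X s * charFn P Y t)‖ ^ 2 ∂ν := fun s =>
    integral_nonneg fun t => sq_nonneg _
  have hFbdd : ∀ s, ∫ t, ‖(jointCharFn P X Y s t - charFn P X s * charFn P Y t)‖ ^ 2 ∂ν ≤ 4 * (ν Set.univ).toReal := by
    intro s
    have h := norm_integral_le_of_norm_le_const (μ := ν) (C := 4)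
      (f := fun t => ‖(jointCharFn P X Y s t - charFn P X s * charFn P Y t)‖ ^ 2)
      (ae_of_all _ fun t => by
        rw [Real.norm_eq_abs, abs_of_nonneg (sq_nonneg _)]; exact hφbdd s t)
    rwa [Real.norm_eq_abs, abs_of_nonneg (hFnn s)] at h
  have hFint : Integrable (fun s => ∫ t, ‖(jointCharFn P X Y s t - charFn P X s * charFn P Y t)‖ ^ 2 ∂ν) μ := by
    refine (integrable_const (4 * (ν Set.univ).toReal)).mono' hFsm.aestronglyMeasurable
      (ae_of_all _ fun s => ?_)
    rw [Real.norm_eq_abs, abs_of_nonneg (hFnn s)]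
    exact hFbdd s
  have step1 : (gdCov μ ν P X Y).toReal = ∫ s, ∫ t, ‖(jointCharFn P X Y s t - charFn P X s * charFn P Y t)‖ ^ 2 ∂ν ∂μ := by
    simp only [gdCov]
    rw [lintegral_congr hIν,
      ← ofReal_integral_eq_lintegral_ofReal hFint (ae_of_all _ hFnn),
      ENNReal.toReal_ofReal (integral_nonneg fun s => hFnn s)]
  -- step 2 : pointwise identity via the key lemma
  have key_st : ∀ s t, (∫ z, Ck s t z ∂κ)
      = (‖(jointCharFn P X Y s t - charFn P X s * charFn P Y t)‖ ^ 2 + ‖(jointCharFn P X Y s (-t) - charFn P X s * charFn P Y (-t))‖ ^ 2) / 2 := by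
    intro s t
    rw [hκ, key π s t, hFchar s t, hF'char s t, hgchar s, hhchar t, ← hconjh t,
      normSq_eq, normSq_eq]
  have hsymν : ∀ s, ∫ t, ‖(jointCharFn P X Y s (-t) - charFn P X s * charFn P Y (-t))‖ ^ 2 ∂ν = ∫ t, ‖(jointCharFn P X Y s t - charFn P X s * charFn P Y t)‖ ^ 2 ∂ν := by
    intro s
    have hg : AEStronglyMeasurable (fun t => ‖(jointCharFn P X Y s t - charFn P X s * charFn P Y t)‖ ^ 2)
        (ν.map (fun r => -r)) := by
      rw [hνsym']
      exact (hφsm.comp_measurable measurable_prodMk_left).aestronglyMeasurable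
    calc ∫ t, ‖(jointCharFn P X Y s (-t) - charFn P X s * charFn P Y (-t))‖ ^ 2 ∂ν
        = ∫ t, ‖(jointCharFn P X Y s t - charFn P X s * charFn P Y t)‖ ^ 2 ∂(ν.map (fun r => -r)) :=
          (integral_map measurable_neg.aemeasurable hg).symm
    _ = ∫ t, ‖(jointCharFn P X Y s t - charFn P X s * charFn P Y t)‖ ^ 2 ∂ν := by rw [hνsym']
  have eq2 : ∀ s, ∫ t, ‖(jointCharFn P X Y s t - charFn P X s * charFn P Y t)‖ ^ 2 ∂ν = ∫ t, (∫ z, Ck s t z ∂κ) ∂ν := by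
    intro s
    have hsplit : ∫ t, (‖(jointCharFn P X Y s t - charFn P X s * charFn P Y t)‖ ^ 2 + ‖(jointCharFn P X Y s (-t) - charFn P X s * charFn P Y (-t))‖ ^ 2) / 2 ∂ν
        = ((∫ t, ‖(jointCharFn P X Y s t - charFn P X s * charFn P Y t)‖ ^ 2 ∂ν) + ∫ t, ‖(jointCharFn P X Y s (-t) - charFn P X s * charFn P Y (-t))‖ ^ 2 ∂ν) / 2 := by
      rw [integral_div, integral_add (hφint s) (hφint' s)]
    calc ∫ t, ‖(jointCharFn P X Y s t - charFn P X s * charFn P Y t)‖ ^ 2 ∂ν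
        = ∫ t, (‖(jointCharFn P X Y s t - charFn P X s * charFn P Y t)‖ ^ 2 + ‖(jointCharFn P X Y s (-t) - charFn P X s * charFn P Y (-t))‖ ^ 2) / 2 ∂ν := by
          rw [hsplit, hsymν s]; ring
    _ = ∫ t, (∫ z, Ck s t z ∂κ) ∂ν := integral_congr_ae (ae_of_all _ fun t => (key_st s t).symm)
  -- step 3 : Fubini
  have swap1 : ∀ s, ∫ t, (∫ z, Ck s t z ∂κ) ∂ν = ∫ z, (∫ t, Ck s t z ∂ν) ∂κ := by
    intro s
    refine integral_integral_swap ?_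
    refine (integrable_const (4 : ℝ)).mono'
      ((measurable_Ck_joint.comp
        (((measurable_const.prodMk measurable_fst).prodMk measurable_snd))).aestronglyMeasurable)
      (ae_of_all _ fun q => ?_)
    rw [Real.norm_eq_abs]
    exact abs_Ck_le s q.1 q.2
  have hWsm : StronglyMeasurable (fun q : EuclideanSpace ℝ (Fin m) ×
      (Fin 4 → EuclideanSpace ℝ (Fin m) × EuclideanSpace ℝ (Fin n)) =>
        ∫ t, Ck q.1 t q.2 ∂ν) := by
    apply MeasureTheory.StronglyMeasurable.integral_prod_right'
      (f := fun r : (EuclideanSpace ℝ (Fin m) ×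
        (Fin 4 → EuclideanSpace ℝ (Fin m) × EuclideanSpace ℝ (Fin n))) ×
          EuclideanSpace ℝ (Fin n) => Ck r.1.1 r.2 r.1.2)
    exact (measurable_Ck_joint.comp
      ((((measurable_fst.comp measurable_fst).prodMk measurable_snd).prodMk
        (measurable_snd.comp measurable_fst)))).stronglyMeasurable
  have swap2 : ∫ s, (∫ z, (∫ t, Ck s t z ∂ν) ∂κ) ∂μ
      = ∫ z, (∫ s, (∫ t, Ck s t z ∂ν) ∂μ) ∂κ := by
    refine integral_integral_swap ?_
    refine (integrable_const (4 * (ν Set.univ).toReal)).mono' hWsm.aestronglyMeasurable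
      (ae_of_all _ fun q => ?_)
    exact norm_integral_le_of_norm_le_const (ae_of_all _ fun t => by
      rw [Real.norm_eq_abs]; exact abs_Ck_le q.1 t q.2)
  -- step 4 : pointwise evaluation in z
  have hz : ∀ z : Fin 4 → EuclideanSpace ℝ (Fin m) × EuclideanSpace ℝ (Fin n),
      ∫ s, (∫ t, Ck s t z ∂ν) ∂μ = (realCndf μ ((z 0).1 - (z 3).1) - realCndf μ ((z 3).1 - (z 1).1)) * (realCndf ν ((z 3).2 - (z 0).2) - realCndf ν ((z 0).2 - (z 2).2)) := by
    intro z
    calc ∫ s, (∫ t, Ck s t z ∂ν) ∂μ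
        = ∫ s, (Real.cos ⟪s, (z 0).1 - (z 3).1⟫ - Real.cos ⟪s, (z 3).1 - (z 1).1⟫) *
            (realCndf ν ((z 0).2 - (z 2).2) - realCndf ν ((z 3).2 - (z 0).2)) ∂μ := by
          refine integral_congr_ae (ae_of_all _ fun s => ?_)
          simp only [Ck]
          rw [integral_const_mul, integral_sub (gdaux_integrable_cos ν _)
            (gdaux_integrable_cos ν _), gdaux_integral_cos ν _, gdaux_integral_cos ν _]
          ring
    _ = (realCndf μ ((z 3).1 - (z 1).1) - realCndf μ ((z 0).1 - (z 3).1)) *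
            (realCndf ν ((z 0).2 - (z 2).2) - realCndf ν ((z 3).2 - (z 0).2)) := by
          rw [integral_mul_const, integral_sub (gdaux_integrable_cos μ _)
            (gdaux_integrable_cos μ _), gdaux_integral_cos μ _, gdaux_integral_cos μ _]
          ring
    _ = (realCndf μ ((z 0).1 - (z 3).1) - realCndf μ ((z 3).1 - (z 1).1)) * (realCndf ν ((z 3).2 - (z 0).2) - realCndf ν ((z 0).2 - (z 2).2)) := by ring
  -- step 5 : identification of κ with the joint law of the four copies
  have hT : Measurable (fun ω => fun i => (X' i ω, Y' i ω)) :=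
    measurable_pi_lambda _ fun i => (hX' i).prodMk (hY' i)
  have hmapT : P.map (fun ω => fun i => (X' i ω, Y' i ω)) = κ := by
    rw [hκ]
    refine (Measure.pi_eq (μ := fun _ : Fin 4 => π) fun A hA => ?_).symm
    rw [Measure.map_apply hT (MeasurableSet.univ_pi hA)]
    have hpre : (fun ω => fun i => (X' i ω, Y' i ω)) ⁻¹' Set.pi Set.univ A
        = ⋂ i, (fun ω => (X' i ω, Y' i ω)) ⁻¹' A i := by
      ext ω
      simp [Set.mem_pi]
    rw [hpre, show (⋂ i, (fun ω => (X' i ω, Y' i ω)) ⁻¹' A i)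
        = ⋂ i ∈ Finset.univ, (fun ω => (X' i ω, Y' i ω)) ⁻¹' A i by simp,
      hiid.measure_inter_preimage_eq_mul Finset.univ (fun i _ => hA i)]
    refine Finset.prod_congr rfl fun i _ => ?_
    rw [← Measure.map_apply ((hX' i).prodMk (hY' i)) (hA i), (hid i).map_eq, ← hπ]
  have hGm : Measurable (fun z : Fin 4 → EuclideanSpace ℝ (Fin m) × EuclideanSpace ℝ (Fin n) =>
      (realCndf μ ((z 0).1 - (z 3).1) - realCndf μ ((z 3).1 - (z 1).1)) * (realCndf ν ((z 3).2 - (z 0).2) - realCndf ν ((z 0).2 - (z 2).2))) := by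
    have hμm := gdaux_measurable_realCndf μ
    have hνm := gdaux_measurable_realCndf ν
    exact ((hμm.comp (((measurable_pi_apply 0).fst).sub ((measurable_pi_apply 3).fst))).sub
      (hμm.comp (((measurable_pi_apply 3).fst).sub ((measurable_pi_apply 1).fst)))).mul
      ((hνm.comp (((measurable_pi_apply 3).snd).sub ((measurable_pi_apply 0).snd))).sub
      (hνm.comp (((measurable_pi_apply 0).snd).sub ((measurable_pi_apply 2).snd))))
  -- conclusion
  calc (gdCov μ ν P X Y).toReal
      = ∫ s, ∫ t, ‖(jointCharFn P X Y s t - charFn P X s * charFn P Y t)‖ ^ 2 ∂ν ∂μ := step1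
  _ = ∫ s, (∫ z, (∫ t, Ck s t z ∂ν) ∂κ) ∂μ :=
      integral_congr_ae (ae_of_all _ fun s => (eq2 s).trans (swap1 s))
  _ = ∫ z, (∫ s, (∫ t, Ck s t z ∂ν) ∂μ) ∂κ := swap2
  _ = ∫ z, (realCndf μ ((z 0).1 - (z 3).1) - realCndf μ ((z 3).1 - (z 1).1)) * (realCndf ν ((z 3).2 - (z 0).2) - realCndf ν ((z 0).2 - (z 2).2)) ∂κ := integral_congr_ae (ae_of_all _ hz)
  _ = ∫ ω, (realCndf μ (X' 0 ω - X' 3 ω) - realCndf μ (X' 3 ω - X' 1 ω))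
        * (realCndf ν (Y' 3 ω - Y' 0 ω) - realCndf ν (Y' 0 ω - Y' 2 ω)) ∂P := by
      rw [← hmapT, integral_map hT.aemeasurable hGm.aestronglyMeasurable]
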